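/- The result of CookieMerge has pairwise distinct cookie names: for any sequence oldcookies of cookies with pairwise distinct names and any sequence newcookies of cookies, every two distinct cookies in CookieMerge(oldcookies, newcookies) have distinct names. -/

import Mathlib

/-- A cookie `⟨name, ⟨value, secure, session, httpOnly⟩⟩`. -/
structure Cookie where
  name : String
  value : String
  secure : Bool
  session : Bool
  httpOnly : Bool
deriving DecidableEq

/-- From a list of cookies, keep for each name only the last (rightmost) occurrence,
preserving the order of the kept cookies. -/
def keepLast (l : List Cookie) : List Cookie :=
  ((l.zipIdx.map Prod.swap).filter fun p => decide (∀ q ∈ l.zipIdx.map Prod.swap, q.2.name = p.2.name → q.1 ≤ p.1)).map Prod.snd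

lemma keepLast_names_nodup (l : List Cookie) : ((keepLast l).map Cookie.name).Nodup := by
  unfold keepLast
  rw [List.map_map]
  have hfst : ((l.zipIdx.map Prod.swap).map Prod.fst).Nodup := by
    rw [List.map_map, show Prod.fst ∘ Prod.swap = (Prod.snd : Cookie × ℕ → ℕ) from rfl, List.zipIdx_map_snd]; apply List.nodup_range' <;> decide
  have henum : (l.zipIdx.map Prod.swap).Nodup := hfst.of_map _
  refine List.Nodup.map_on ?_ ((List.filter_sublist (p := _)).nodup henum)
  intro x hx y hy hxy
  rw [List.mem_filter] at hx hy
  have px : ∀ q ∈ l.zipIdx.map Prod.swap, q.2.name = x.2.name → q.1 ≤ x.1 := of_decide_eq_true hx.2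
  have py : ∀ q ∈ l.zipIdx.map Prod.swap, q.2.name = y.2.name → q.1 ≤ y.1 := of_decide_eq_true hy.2
  have h1 : x.1 ≤ y.1 := py x hx.1 hxy
  have h2 : y.1 ≤ x.1 := px y hy.1 hxy.symm
  exact List.inj_on_of_nodup_map hfst hx.1 hy.1 (le_antisymm h1 h2)

/-- The `CookieMerge` algorithm (RFC6265 storage mechanism, simplified): first remove
from `newcookies` all httpOnly cookies and deduplicate by name (keeping the rightmost);
then the result consists of all cookies whose name appears in exactly one of the two
sequences together with, for each name appearing in both, the new cookie if the old
cookie is not httpOnly, and the old cookie otherwise. -/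
def CookieMerge (oldcookies newcookies : List Cookie) : Set Cookie :=
  let new' := keepLast (newcookies.filter fun c => !c.httpOnly)
  {c | (c ∈ oldcookies ∧ ∀ c' ∈ new', c'.name ≠ c.name)
     ∨ (c ∈ new' ∧ ∀ c' ∈ oldcookies, c'.name ≠ c.name)
     ∨ (∃ cold ∈ oldcookies, ∃ cnew ∈ new', cold.name = cnew.name ∧
         ((cold.httpOnly = false ∧ c = cnew) ∨ (cold.httpOnly = true ∧ c = cold)))}

/-- The result of `CookieMerge` has pairwise distinct cookie names. -/
theorem stmt9 (oldcookies newcookies : List Cookie)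
    (hold : (oldcookies.map Cookie.name).Nodup) :
    ∀ c₁ ∈ CookieMerge oldcookies newcookies, ∀ c₂ ∈ CookieMerge oldcookies newcookies,
      c₁ ≠ c₂ → c₁.name ≠ c₂.name := by
  intro c₁ h₁ c₂ h₂ hne hname
  apply hne
  set new' := keepLast (newcookies.filter fun c => !c.httpOnly) with hnew'
  have hnewnd : (new'.map Cookie.name).Nodup := keepLast_names_nodup _
  have oldinj : ∀ x ∈ oldcookies, ∀ y ∈ oldcookies, x.name = y.name → x = y :=
    fun x hx y hy => List.inj_on_of_nodup_map hold hx hy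
  have newinj : ∀ x ∈ new', ∀ y ∈ new', x.name = y.name → x = y :=
    fun x hx y hy => List.inj_on_of_nodup_map hnewnd hx hy
  simp only [CookieMerge, Set.mem_setOf_eq] at h₁ h₂
  -- name of the "third case" element equals the common name
  have nm3 : ∀ c : Cookie, (∃ cold ∈ oldcookies, ∃ cnew ∈ new', cold.name = cnew.name ∧
      ((cold.httpOnly = false ∧ c = cnew) ∨ (cold.httpOnly = true ∧ c = cold))) →
      ∃ cold ∈ oldcookies, ∃ cnew ∈ new', cold.name = cnew.name ∧ c.name = cnew.name ∧
      ((cold.httpOnly = false ∧ c = cnew) ∨ (cold.httpOnly = true ∧ c = cold)) := by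
    rintro c ⟨cold, hco, cnew, hcn, heq, hcase⟩
    refine ⟨cold, hco, cnew, hcn, heq, ?_, hcase⟩
    rcases hcase with ⟨_, rfl⟩ | ⟨_, rfl⟩
    · rfl
    · exact heq
  rcases h₁ with ⟨ho₁, hn₁⟩ | ⟨hn₁, ho₁⟩ | h₁3 <;>
    rcases h₂ with ⟨ho₂, hn₂⟩ | ⟨hn₂, ho₂⟩ | h₂3
  · exact oldinj _ ho₁ _ ho₂ hname
  · exact absurd hname (ho₂ _ ho₁)
  · obtain ⟨cold, hco, cnew, hcn, heq, hnm, _⟩ := nm3 _ h₂3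
    have : cnew.name = c₁.name := by rw [← hnm, hname]
    exact absurd this (hn₁ _ hcn)
  · exact absurd hname.symm (ho₁ _ ho₂)
  · exact newinj _ hn₁ _ hn₂ hname
  · obtain ⟨cold, hco, cnew, hcn, heq, hnm, _⟩ := nm3 _ h₂3
    have : cold.name = c₁.name := by rw [heq, ← hnm, hname]
    exact absurd this (ho₁ _ hco)
  · obtain ⟨cold, hco, cnew, hcn, heq, hnm, _⟩ := nm3 _ h₁3
    have : cnew.name = c₂.name := by rw [← hnm, hname]
    exact absurd this (hn₂ _ hcn)
  · obtain ⟨cold, hco, cnew, hcn, heq, hnm, _⟩ := nm3 _ h₁3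
    have : cold.name = c₂.name := by rw [heq, ← hnm, hname]
    exact absurd this (ho₂ _ hco)
  · obtain ⟨cold₁, hco₁, cnew₁, hcn₁, heq₁, hnm₁, hc₁⟩ := nm3 _ h₁3
    obtain ⟨cold₂, hco₂, cnew₂, hcn₂, heq₂, hnm₂, hc₂⟩ := nm3 _ h₂3
    have hcne : cnew₁ = cnew₂ := newinj _ hcn₁ _ hcn₂ (by rw [← hnm₁, hname, hnm₂])
    subst hcne
    have hcoe : cold₁ = cold₂ := oldinj _ hco₁ _ hco₂ (heq₁.trans heq₂.symm)
    subst hcoe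
    rcases hc₁ with ⟨hb₁, rfl⟩ | ⟨hb₁, rfl⟩ <;> rcases hc₂ with ⟨hb₂, rfl⟩ | ⟨hb₂, rfl⟩ <;>
      first | rfl | (rw [hb₁] at hb₂; cases hb₂)
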